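/- The Jucys–Murphy elements x_1,…,x_n of the Brauer algebra B(n,N) pairwise commute. -/

import Mathlib

noncomputable section

open scoped BigOperators

/-- Index type for the generators of the Brauer algebra `B(n,N)`:
`Sum.inl` indexes the generators `s₁,…,s_{n-1}` and `Sum.inr` the
generators `t₁,…,t_{n-1}` (0-based internally). -/
abbrev BIdx (n : ℕ) := Fin (n - 1) ⊕ Fin (n - 1)

/-- The generator `s_k` (1-based) in the free algebra. -/
def bS (n : ℕ) (k : ℕ) : FreeAlgebra ℂ (BIdx n) :=
  if h : 1 ≤ k ∧ k ≤ n - 1 then FreeAlgebra.ι ℂ (Sum.inl ⟨k - 1, by omega⟩) else 0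

/-- The generator `t_k` (1-based) in the free algebra. -/
def bT (n : ℕ) (k : ℕ) : FreeAlgebra ℂ (BIdx n) :=
  if h : 1 ≤ k ∧ k ≤ n - 1 then FreeAlgebra.ι ℂ (Sum.inr ⟨k - 1, by omega⟩) else 0

/-- The defining relations of the Brauer algebra `B(n,N)`. -/
inductive BrauerRel (n : ℕ) (N : ℂ) :
    FreeAlgebra ℂ (BIdx n) → FreeAlgebra ℂ (BIdx n) → Prop
  | s_sq (k : ℕ) (h : 1 ≤ k ∧ k ≤ n - 1) :
      BrauerRel n N (bS n k * bS n k) 1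
  | t_sq (k : ℕ) (h : 1 ≤ k ∧ k ≤ n - 1) :
      BrauerRel n N (bT n k * bT n k) (N • bT n k)
  | st (k : ℕ) (h : 1 ≤ k ∧ k ≤ n - 1) :
      BrauerRel n N (bS n k * bT n k) (bT n k)
  | ts (k : ℕ) (h : 1 ≤ k ∧ k ≤ n - 1) :
      BrauerRel n N (bT n k * bS n k) (bT n k)
  | braid (k : ℕ) (h : 1 ≤ k ∧ k + 1 ≤ n - 1) :
      BrauerRel n N (bS n k * bS n (k+1) * bS n k) (bS n (k+1) * bS n k * bS n (k+1))
  | ttt_lo (k : ℕ) (h : 1 ≤ k ∧ k + 1 ≤ n - 1) :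
      BrauerRel n N (bT n k * bT n (k+1) * bT n k) (bT n k)
  | ttt_hi (k : ℕ) (h : 1 ≤ k ∧ k + 1 ≤ n - 1) :
      BrauerRel n N (bT n (k+1) * bT n k * bT n (k+1)) (bT n (k+1))
  | stt (k : ℕ) (h : 1 ≤ k ∧ k + 1 ≤ n - 1) :
      BrauerRel n N (bS n k * bT n (k+1) * bT n k) (bS n (k+1) * bT n k)
  | tts (k : ℕ) (h : 1 ≤ k ∧ k + 1 ≤ n - 1) :
      BrauerRel n N (bT n (k+1) * bT n k * bS n (k+1)) (bT n (k+1) * bS n k)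
  | ss_comm (k l : ℕ)
      (h : 1 ≤ k ∧ k ≤ n - 1 ∧ 1 ≤ l ∧ l ≤ n - 1 ∧ (k + 1 < l ∨ l + 1 < k)) :
      BrauerRel n N (bS n k * bS n l) (bS n l * bS n k)
  | ts_comm (k l : ℕ)
      (h : 1 ≤ k ∧ k ≤ n - 1 ∧ 1 ≤ l ∧ l ≤ n - 1 ∧ (k + 1 < l ∨ l + 1 < k)) :
      BrauerRel n N (bT n k * bS n l) (bS n l * bT n k)
  | tt_comm (k l : ℕ)
      (h : 1 ≤ k ∧ k ≤ n - 1 ∧ 1 ≤ l ∧ l ≤ n - 1 ∧ (k + 1 < l ∨ l + 1 < k)) :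
      BrauerRel n N (bT n k * bT n l) (bT n l * bT n k)

/-- The Brauer algebra `B(n,N)`. -/
abbrev BrauerAlgebra (n : ℕ) (N : ℂ) := RingQuot (BrauerRel n N)

/-- The generator `s_k` (1-based) of `B(n,N)`. -/
def sB (n : ℕ) (N : ℂ) (k : ℕ) : BrauerAlgebra n N :=
  RingQuot.mkAlgHom ℂ (BrauerRel n N) (bS n k)

/-- The generator `t_k` (1-based) of `B(n,N)`. -/
def tB (n : ℕ) (N : ℂ) (k : ℕ) : BrauerAlgebra n N :=
  RingQuot.mkAlgHom ℂ (BrauerRel n N) (bT n k)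

/-- The element `σ_{k,l} = s_{l−1} s_{l−2} ⋯ s_{k+1}` of `B(n,N)`. -/
def sigmaB (n : ℕ) (N : ℂ) (k l : ℕ) : BrauerAlgebra n N :=
  ((List.range (l - 1 - k)).map (fun j => sB n N (l - 1 - j))).prod

/-- The element `σ_{k,l}⁻¹ = s_{k+1} s_{k+2} ⋯ s_{l−1}` of `B(n,N)`. -/
def sigmaBInv (n : ℕ) (N : ℂ) (k l : ℕ) : BrauerAlgebra n N :=
  ((List.range (l - 1 - k)).map (fun j => sB n N (k + 1 + j))).prod

/-- The transposition `(k,l) = σ_{k,l} s_k σ_{k,l}⁻¹` in `B(n,N)` (`k < l`). -/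
def transpB (n : ℕ) (N : ℂ) (k l : ℕ) : BrauerAlgebra n N :=
  sigmaB n N k l * sB n N k * sigmaBInv n N k l

/-- The element `ov(k,l) = σ_{k,l} t_k σ_{k,l}⁻¹` in `B(n,N)` (`k < l`). -/
def ovB (n : ℕ) (N : ℂ) (k l : ℕ) : BrauerAlgebra n N :=
  sigmaB n N k l * tB n N k * sigmaBInv n N k l

/-- The Jucys–Murphy element
`x_k = (N−1)/2 + Σ_{l=1}^{k−1} ((l,k) − ov(l,k))` of `B(n,N)` (1-based). -/
def xB (n : ℕ) (N : ℂ) (k : ℕ) : BrauerAlgebra n N :=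
  algebraMap ℂ (BrauerAlgebra n N) ((N - 1) / 2)
    + ∑ l ∈ Finset.range (k - 1), (transpB n N (l + 1) k - ovB n N (l + 1) k)

/-- The subalgebra `B(m,N)` of `B(n,N)` generated by
`s₁,…,s_{m−1}, t₁,…,t_{m−1}`. -/
def Bsub (n : ℕ) (N : ℂ) (m : ℕ) : Subalgebra ℂ (BrauerAlgebra n N) :=
  Algebra.adjoin ℂ
    {x | ∃ k, 1 ≤ k ∧ k ≤ m - 1 ∧ (x = sB n N k ∨ x = tB n N k)}


namespace BrauerJM

variable {n : ℕ} {N : ℂ}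

theorem sB_zero {k : ℕ} (h : ¬(1 ≤ k ∧ k ≤ n - 1)) : sB n N k = 0 := by
  unfold sB bS; rw [dif_neg h, map_zero]

theorem tB_zero {k : ℕ} (h : ¬(1 ≤ k ∧ k ≤ n - 1)) : tB n N k = 0 := by
  unfold tB bT; rw [dif_neg h, map_zero]

theorem relSS {k : ℕ} (h : 1 ≤ k ∧ k ≤ n - 1) : sB n N k * sB n N k = 1 := by
  simpa only [map_mul, map_one, sB] using
    RingQuot.mkAlgHom_rel ℂ (BrauerRel.s_sq (N := N) k h)

theorem relTT {k : ℕ} (h : 1 ≤ k ∧ k ≤ n - 1) : tB n N k * tB n N k = N • tB n N k := by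
  simpa only [map_mul, map_smul, tB] using
    RingQuot.mkAlgHom_rel ℂ (BrauerRel.t_sq (N := N) k h)

theorem relST {k : ℕ} (h : 1 ≤ k ∧ k ≤ n - 1) : sB n N k * tB n N k = tB n N k := by
  simpa only [map_mul, sB, tB] using
    RingQuot.mkAlgHom_rel ℂ (BrauerRel.st (N := N) k h)

theorem relTS {k : ℕ} (h : 1 ≤ k ∧ k ≤ n - 1) : tB n N k * sB n N k = tB n N k := by
  simpa only [map_mul, sB, tB] using
    RingQuot.mkAlgHom_rel ℂ (BrauerRel.ts (N := N) k h)

theorem relBraid {k : ℕ} (h : 1 ≤ k ∧ k + 1 ≤ n - 1) :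
    sB n N k * sB n N (k+1) * sB n N k = sB n N (k+1) * sB n N k * sB n N (k+1) := by
  simpa only [map_mul, sB] using
    RingQuot.mkAlgHom_rel ℂ (BrauerRel.braid (N := N) k h)

theorem relTTTlo {k : ℕ} (h : 1 ≤ k ∧ k + 1 ≤ n - 1) :
    tB n N k * tB n N (k+1) * tB n N k = tB n N k := by
  simpa only [map_mul, tB] using
    RingQuot.mkAlgHom_rel ℂ (BrauerRel.ttt_lo (N := N) k h)

theorem relTTThi {k : ℕ} (h : 1 ≤ k ∧ k + 1 ≤ n - 1) :
    tB n N (k+1) * tB n N k * tB n N (k+1) = tB n N (k+1) := by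
  simpa only [map_mul, tB] using
    RingQuot.mkAlgHom_rel ℂ (BrauerRel.ttt_hi (N := N) k h)

theorem relSTT {k : ℕ} (h : 1 ≤ k ∧ k + 1 ≤ n - 1) :
    sB n N k * tB n N (k+1) * tB n N k = sB n N (k+1) * tB n N k := by
  simpa only [map_mul, sB, tB] using
    RingQuot.mkAlgHom_rel ℂ (BrauerRel.stt (N := N) k h)

theorem relTTS {k : ℕ} (h : 1 ≤ k ∧ k + 1 ≤ n - 1) :
    tB n N (k+1) * tB n N k * sB n N (k+1) = tB n N (k+1) * sB n N k := by
  simpa only [map_mul, sB, tB] using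
    RingQuot.mkAlgHom_rel ℂ (BrauerRel.tts (N := N) k h)

/-- `s_k` and `s_l` commute when `|k-l| > 1` (no range hypotheses needed). -/
theorem commSS {k l : ℕ} (h : k + 1 < l ∨ l + 1 < k) :
    Commute (sB n N k) (sB n N l) := by
  by_cases hk : 1 ≤ k ∧ k ≤ n - 1
  · by_cases hl : 1 ≤ l ∧ l ≤ n - 1
    · show _ = _
      simpa only [map_mul, sB] using
        RingQuot.mkAlgHom_rel ℂ (BrauerRel.ss_comm (N := N) k l
          ⟨hk.1, hk.2, hl.1, hl.2, h⟩)
    · rw [sB_zero hl]; exact Commute.zero_right _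
  · rw [sB_zero hk]; exact Commute.zero_left _

theorem commTS {k l : ℕ} (h : k + 1 < l ∨ l + 1 < k) :
    Commute (tB n N k) (sB n N l) := by
  by_cases hk : 1 ≤ k ∧ k ≤ n - 1
  · by_cases hl : 1 ≤ l ∧ l ≤ n - 1
    · show _ = _
      simpa only [map_mul, sB, tB] using
        RingQuot.mkAlgHom_rel ℂ (BrauerRel.ts_comm (N := N) k l
          ⟨hk.1, hk.2, hl.1, hl.2, h⟩)
    · rw [sB_zero hl]; exact Commute.zero_right _
  · rw [tB_zero hk]; exact Commute.zero_left _

theorem commST {k l : ℕ} (h : k + 1 < l ∨ l + 1 < k) :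
    Commute (sB n N k) (tB n N l) := (commTS h.symm).symm

theorem commTT {k l : ℕ} (h : k + 1 < l ∨ l + 1 < k) :
    Commute (tB n N k) (tB n N l) := by
  by_cases hk : 1 ≤ k ∧ k ≤ n - 1
  · by_cases hl : 1 ≤ l ∧ l ≤ n - 1
    · show _ = _
      simpa only [map_mul, tB] using
        RingQuot.mkAlgHom_rel ℂ (BrauerRel.tt_comm (N := N) k l
          ⟨hk.1, hk.2, hl.1, hl.2, h⟩)
    · rw [tB_zero hl]; exact Commute.zero_right _
  · rw [tB_zero hk]; exact Commute.zero_left _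


/-- Conjugation by commuting elements. -/
theorem conj_conj {M : Type*} [Monoid M] {a b x : M} (hc : a * b = b * a) :
    a * (b * x * b) * a = b * (a * x * a) * b := by
  calc a * (b * x * b) * a = (a * b) * (x * (b * a)) := by simp only [mul_assoc]
    _ = (b * a) * (x * (b * a)) := by rw [hc]
    _ = b * (a * x * a) * b := by nth_rewrite 2 [← hc]; simp only [mul_assoc]

theorem sigmaB_base {k l : ℕ} (h : l ≤ k + 1) : sigmaB n N k l = 1 := by
  unfold sigmaB
  have h1 : l - 1 - k = 0 := by omega
  rw [h1]; simp

theorem sigmaBInv_base {k l : ℕ} (h : l ≤ k + 1) : sigmaBInv n N k l = 1 := by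
  unfold sigmaBInv
  have h1 : l - 1 - k = 0 := by omega
  rw [h1]; simp

theorem sigmaB_succ {k l : ℕ} (h : k + 1 ≤ l) :
    sigmaB n N k (l + 1) = sB n N l * sigmaB n N k l := by
  unfold sigmaB
  have h1 : l + 1 - 1 - k = (l - 1 - k) + 1 := by omega
  rw [h1, List.range_succ_eq_map, List.map_cons, List.prod_cons, List.map_map]
  have h2 : l + 1 - 1 - 0 = l := by omega
  rw [h2]
  congr 1
  congr 1
  apply List.map_congr_left
  intro j hj
  simp only [Function.comp_apply]
  congr 1
  omega

theorem sigmaBInv_succ {k l : ℕ} (h : k + 1 ≤ l) :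
    sigmaBInv n N k (l + 1) = sigmaBInv n N k l * sB n N l := by
  unfold sigmaBInv
  have h1 : l + 1 - 1 - k = (l - 1 - k) + 1 := by omega
  rw [h1, List.range_succ, List.map_append, List.prod_append]
  congr 1
  have h2 : k + 1 + (l - 1 - k) = l := by omega
  simp [h2]

theorem transpB_base (k : ℕ) : transpB n N k (k + 1) = sB n N k := by
  unfold transpB
  rw [sigmaB_base le_rfl, sigmaBInv_base le_rfl, one_mul, mul_one]

theorem ovB_base (k : ℕ) : ovB n N k (k + 1) = tB n N k := by
  unfold ovB
  rw [sigmaB_base le_rfl, sigmaBInv_base le_rfl, one_mul, mul_one]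

theorem transpB_succ {k l : ℕ} (h : k + 1 ≤ l) :
    transpB n N k (l + 1) = sB n N l * transpB n N k l * sB n N l := by
  unfold transpB
  rw [sigmaB_succ h, sigmaBInv_succ h]
  simp only [mul_assoc]

theorem ovB_succ {k l : ℕ} (h : k + 1 ≤ l) :
    ovB n N k (l + 1) = sB n N l * ovB n N k l * sB n N l := by
  unfold ovB
  rw [sigmaB_succ h, sigmaBInv_succ h]
  simp only [mul_assoc]

/-- Far commutation of `s_r`/`t_r` with `(i,j)` and `ov(i,j)`. -/
theorem farS_transp {r i j : ℕ} (hi : 1 ≤ i) (hij : i + 1 ≤ j)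
    (h : j < r ∨ r + 1 < i) : Commute (sB n N r) (transpB n N i j) := by
  induction j, hij using Nat.le_induction with
  | base => rw [transpB_base]; exact commSS (by omega)
  | succ l hl ih =>
    rw [transpB_succ hl]
    exact ((commSS (k := r) (l := l) (by omega)).mul_right
      (ih (by omega))).mul_right (commSS (by omega))

theorem farS_ov {r i j : ℕ} (hi : 1 ≤ i) (hij : i + 1 ≤ j)
    (h : j < r ∨ r + 1 < i) : Commute (sB n N r) (ovB n N i j) := by
  induction j, hij using Nat.le_induction with
  | base => rw [ovB_base]; exact commST (by omega)
  | succ l hl ih =>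
    rw [ovB_succ hl]
    exact ((commSS (k := r) (l := l) (by omega)).mul_right
      (ih (by omega))).mul_right (commSS (by omega))

theorem farT_transp {r i j : ℕ} (hi : 1 ≤ i) (hij : i + 1 ≤ j)
    (h : j < r ∨ r + 1 < i) : Commute (tB n N r) (transpB n N i j) := by
  induction j, hij using Nat.le_induction with
  | base => rw [transpB_base]; exact commTS (by omega)
  | succ l hl ih =>
    rw [transpB_succ hl]
    exact ((commTS (k := r) (l := l) (by omega)).mul_right
      (ih (by omega))).mul_right (commTS (by omega))

theorem farT_ov {r i j : ℕ} (hi : 1 ≤ i) (hij : i + 1 ≤ j)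
    (h : j < r ∨ r + 1 < i) : Commute (tB n N r) (ovB n N i j) := by
  induction j, hij using Nat.le_induction with
  | base => rw [ovB_base]; exact commTT (by omega)
  | succ l hl ih =>
    rw [ovB_succ hl]
    exact ((commTS (k := r) (l := l) (by omega)).mul_right
      (ih (by omega))).mul_right (commTS (by omega))


/-! ### Derived local identities -/

theorem dTTS {k : ℕ} (h1 : 1 ≤ k) (h2 : k + 1 ≤ n - 1) :
    tB n N k * tB n N (k+1) * sB n N k = tB n N k * sB n N (k+1) := by
  have e2 := congrArg (fun x => tB n N k * x) (relTTS (n := n) (N := N) ⟨h1, h2⟩)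
  simp only [← mul_assoc] at e2
  rw [relTTTlo ⟨h1, h2⟩] at e2
  exact e2.symm

theorem dTSS {k : ℕ} (h1 : 1 ≤ k) (h2 : k + 1 ≤ n - 1) :
    tB n N k * sB n N (k+1) * sB n N k = tB n N k * tB n N (k+1) := by
  rw [← dTTS h1 h2, mul_assoc (tB n N k * tB n N (k+1)), relSS ⟨h1, by omega⟩, mul_one]

theorem dTSS_hi {k : ℕ} (h1 : 1 ≤ k) (h2 : k + 1 ≤ n - 1) :
    tB n N (k+1) * sB n N k * sB n N (k+1) = tB n N (k+1) * tB n N k := by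
  rw [← relTTS ⟨h1, h2⟩, mul_assoc (tB n N (k+1) * tB n N k), relSS ⟨by omega, h2⟩, mul_one]

theorem dTST {k : ℕ} (h1 : 1 ≤ k) (h2 : k + 1 ≤ n - 1) :
    tB n N k * sB n N (k+1) * tB n N k = tB n N k := by
  rw [← dTTS h1 h2, mul_assoc (tB n N k * tB n N (k+1)), relST ⟨h1, by omega⟩,
    relTTTlo ⟨h1, h2⟩]

theorem dSTT {k : ℕ} (h1 : 1 ≤ k) (h2 : k + 1 ≤ n - 1) :
    sB n N (k+1) * tB n N k * tB n N (k+1) = sB n N k * tB n N (k+1) := by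
  rw [← relSTT ⟨h1, h2⟩]
  calc sB n N k * tB n N (k+1) * tB n N k * tB n N (k+1)
      = sB n N k * (tB n N (k+1) * tB n N k * tB n N (k+1)) := by simp only [mul_assoc]
    _ = sB n N k * tB n N (k+1) := by rw [relTTThi ⟨h1, h2⟩]

theorem dSST_hi {k : ℕ} (h1 : 1 ≤ k) (h2 : k + 1 ≤ n - 1) :
    sB n N (k+1) * sB n N k * tB n N (k+1) = tB n N k * tB n N (k+1) := by
  rw [mul_assoc, ← dSTT h1 h2]
  simp only [← mul_assoc]
  rw [relSS ⟨by omega, h2⟩, one_mul]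

theorem dSST {k : ℕ} (h1 : 1 ≤ k) (h2 : k + 1 ≤ n - 1) :
    sB n N k * sB n N (k+1) * tB n N k = tB n N (k+1) * tB n N k := by
  rw [mul_assoc, ← relSTT ⟨h1, h2⟩]
  simp only [← mul_assoc]
  rw [relSS ⟨h1, by omega⟩, one_mul]

theorem dTST_hi {k : ℕ} (h1 : 1 ≤ k) (h2 : k + 1 ≤ n - 1) :
    tB n N (k+1) * sB n N k * tB n N (k+1) = tB n N (k+1) := by
  rw [← relTTS ⟨h1, h2⟩, mul_assoc (tB n N (k+1) * tB n N k), relST ⟨by omega, h2⟩,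
    relTTThi ⟨h1, h2⟩]

/-! ### First-index conjugation: `s_k (k,l) s_k = (k+1,l)` -/

theorem transp_fst {k l : ℕ} (h1 : 1 ≤ k) (hl : k + 2 ≤ l) (hn : l ≤ n) :
    sB n N k * transpB n N k l * sB n N k = transpB n N (k+1) l := by
  revert hn
  induction l, hl using Nat.le_induction with
  | base =>
    intro hn
    have hk1 : 1 ≤ k ∧ k ≤ n - 1 := ⟨h1, by omega⟩
    rw [show k + 2 = (k+1)+1 from rfl, transpB_succ (Nat.le_refl _), transpB_base,
      transpB_base, ← relBraid ⟨h1, by omega⟩]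
    simp only [← mul_assoc]
    rw [relSS hk1, one_mul, mul_assoc, relSS hk1, mul_one]
  | succ l hl ih =>
    intro hn
    have hcomm : sB n N k * sB n N l = sB n N l * sB n N k := (commSS (by omega)).eq
    rw [transpB_succ (show k + 1 ≤ l by omega), transpB_succ (show (k+1) + 1 ≤ l by omega),
      conj_conj hcomm, ih (by omega)]

theorem ov_fst {k l : ℕ} (h1 : 1 ≤ k) (hl : k + 2 ≤ l) (hn : l ≤ n) :
    sB n N k * ovB n N k l * sB n N k = ovB n N (k+1) l := by
  revert hn
  induction l, hl using Nat.le_induction with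
  | base =>
    intro hn
    have hk1 : 1 ≤ k ∧ k ≤ n - 1 := ⟨h1, by omega⟩
    have h2 : k + 1 ≤ n - 1 := by omega
    have e1 := congrArg (fun x => sB n N k * x) (relTTS (n := n) (N := N) ⟨h1, h2⟩)
    simp only [← mul_assoc] at e1
    have e0 : sB n N (k+1) * tB n N k * sB n N (k+1)
        = sB n N k * tB n N (k+1) * sB n N k := by
      rw [← relSTT ⟨h1, h2⟩]
      exact e1
    rw [show k + 2 = (k+1)+1 from rfl, ovB_succ (Nat.le_refl _), ovB_base, ovB_base, e0]
    simp only [← mul_assoc]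
    rw [relSS hk1, one_mul, mul_assoc, relSS hk1, mul_one]
  | succ l hl ih =>
    intro hn
    have hcomm : sB n N k * sB n N l = sB n N l * sB n N k := (commSS (by omega)).eq
    rw [ovB_succ (show k + 1 ≤ l by omega), ovB_succ (show (k+1) + 1 ≤ l by omega),
      conj_conj hcomm, ih (by omega)]


/-! ### Middle-case commutation -/

/-- Generic braid-conjugation commutation in a monoid. -/
theorem braid_conj_comm {M : Type*} [Monoid M] {a b c : M}
    (hbr : b * c * b = c * b * c) (hca : c * a = a * c) :
    Commute b (c * (b * a * b) * c) := by
  have e1 := congrArg (fun x => x * (a * (b * c))) hbr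
  have e2 := congrArg (fun x => (c * b) * x * (b * c)) hca
  have e3 := congrArg (fun x => (c * b * a) * x) hbr.symm
  simp only [← mul_assoc] at e1 e2 e3
  show _ = _
  simp only [← mul_assoc]
  rw [e1, e2, e3]

/-- Generic base computation for `t_{i+1}` commuting with
`s_{i+2} (s_{i+1} a s_{i+1}) s_{i+2}` when `a` commutes with `t_{i+2}`. -/
theorem midT_gen {i : ℕ} (hi : 1 ≤ i) (hn : i + 3 ≤ n) (a : BrauerAlgebra n N)
    (ha : tB n N (i+2) * a = a * tB n N (i+2)) :
    Commute (tB n N (i+1))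
      (sB n N (i+2) * (sB n N (i+1) * a * sB n N (i+1)) * sB n N (i+2)) := by
  have h1 : (1:ℕ) ≤ i + 1 := by omega
  have h2 : (i + 1) + 1 ≤ n - 1 := by omega
  have f1 := congrArg (fun x => x * (a * (sB n N (i+1) * sB n N (i+2))))
    (dTSS (n := n) (N := N) h1 h2)
  have f2 := congrArg (fun x => tB n N (i+1) * x * (sB n N (i+1) * sB n N (i+2))) ha
  have f3 := congrArg (fun x => (tB n N (i+1) * a) * x) (dTSS_hi (n := n) (N := N) h1 h2)
  have g1 := congrArg (fun x => (sB n N (i+2) * (sB n N (i+1) * a)) * x)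
    (dSST (n := n) (N := N) h1 h2)
  have g2 := congrArg (fun x => (sB n N (i+2) * sB n N (i+1)) * x * tB n N (i+1)) ha.symm
  have g3 := congrArg (fun x => x * (a * tB n N (i+1))) (dSST_hi (n := n) (N := N) h1 h2)
  have g4 := congrArg (fun x => tB n N (i+1) * x * tB n N (i+1)) ha
  simp only [← mul_assoc] at f1 f2 f3 g1 g2 g3 g4
  show _ = _
  simp only [← mul_assoc]
  rw [f1, f2, f3, g1, g2, g3, g4]

theorem midS_j0_transp {r : ℕ} (hn : r + 2 ≤ n) :
    ∀ d, 1 ≤ d → ∀ i, 1 ≤ i → i + d = r → Commute (sB n N r) (transpB n N i (r+2)) := by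
  intro d hd
  induction d, hd using Nat.le_induction with
  | base =>
    intro i hi hir
    have hr : r = i + 1 := by omega
    subst hr
    rw [show i + 1 + 2 = (i+2)+1 from rfl, transpB_succ (by omega),
      show i + 2 = (i+1)+1 from rfl, transpB_succ (by omega), transpB_base]
    exact braid_conj_comm (relBraid ⟨by omega, by omega⟩) (commSS (by omega)).eq
  | succ d hd ih =>
    intro i hi hir
    have e := transp_fst (n := n) (N := N) (k := i) (l := r+2) hi (by omega) (by omega)
    have e' : transpB n N i (r+2) = sB n N i * transpB n N (i+1) (r+2) * sB n N i := by
      rw [← e]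
      simp only [← mul_assoc]
      rw [relSS ⟨hi, by omega⟩, one_mul, mul_assoc, relSS ⟨hi, by omega⟩, mul_one]
    rw [e']
    exact ((commSS (by omega)).mul_right (ih (i+1) (by omega) (by omega))).mul_right
      (commSS (by omega))

theorem midS_j0_ov {r : ℕ} (hn : r + 2 ≤ n) :
    ∀ d, 1 ≤ d → ∀ i, 1 ≤ i → i + d = r → Commute (sB n N r) (ovB n N i (r+2)) := by
  intro d hd
  induction d, hd using Nat.le_induction with
  | base =>
    intro i hi hir
    have hr : r = i + 1 := by omega
    subst hr
    rw [show i + 1 + 2 = (i+2)+1 from rfl, ovB_succ (by omega),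
      show i + 2 = (i+1)+1 from rfl, ovB_succ (by omega), ovB_base]
    exact braid_conj_comm (relBraid ⟨by omega, by omega⟩) (commST (by omega)).eq
  | succ d hd ih =>
    intro i hi hir
    have e := ov_fst (n := n) (N := N) (k := i) (l := r+2) hi (by omega) (by omega)
    have e' : ovB n N i (r+2) = sB n N i * ovB n N (i+1) (r+2) * sB n N i := by
      rw [← e]
      simp only [← mul_assoc]
      rw [relSS ⟨hi, by omega⟩, one_mul, mul_assoc, relSS ⟨hi, by omega⟩, mul_one]
    rw [e']
    exact ((commSS (by omega)).mul_right (ih (i+1) (by omega) (by omega))).mul_right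
      (commSS (by omega))

theorem midT_j0_transp {r : ℕ} (hn : r + 2 ≤ n) :
    ∀ d, 1 ≤ d → ∀ i, 1 ≤ i → i + d = r → Commute (tB n N r) (transpB n N i (r+2)) := by
  intro d hd
  induction d, hd using Nat.le_induction with
  | base =>
    intro i hi hir
    have hr : r = i + 1 := by omega
    subst hr
    rw [show i + 1 + 2 = (i+2)+1 from rfl, transpB_succ (by omega),
      show i + 2 = (i+1)+1 from rfl, transpB_succ (by omega), transpB_base]
    exact midT_gen hi (by omega) _ (commTS (by omega)).eq
  | succ d hd ih =>
    intro i hi hir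
    have e := transp_fst (n := n) (N := N) (k := i) (l := r+2) hi (by omega) (by omega)
    have e' : transpB n N i (r+2) = sB n N i * transpB n N (i+1) (r+2) * sB n N i := by
      rw [← e]
      simp only [← mul_assoc]
      rw [relSS ⟨hi, by omega⟩, one_mul, mul_assoc, relSS ⟨hi, by omega⟩, mul_one]
    rw [e']
    exact ((commTS (by omega)).mul_right (ih (i+1) (by omega) (by omega))).mul_right
      (commTS (by omega))

theorem midT_j0_ov {r : ℕ} (hn : r + 2 ≤ n) :
    ∀ d, 1 ≤ d → ∀ i, 1 ≤ i → i + d = r → Commute (tB n N r) (ovB n N i (r+2)) := by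
  intro d hd
  induction d, hd using Nat.le_induction with
  | base =>
    intro i hi hir
    have hr : r = i + 1 := by omega
    subst hr
    rw [show i + 1 + 2 = (i+2)+1 from rfl, ovB_succ (by omega),
      show i + 2 = (i+1)+1 from rfl, ovB_succ (by omega), ovB_base]
    exact midT_gen hi (by omega) _ (commTT (by omega)).eq
  | succ d hd ih =>
    intro i hi hir
    have e := ov_fst (n := n) (N := N) (k := i) (l := r+2) hi (by omega) (by omega)
    have e' : ovB n N i (r+2) = sB n N i * ovB n N (i+1) (r+2) * sB n N i := by
      rw [← e]
      simp only [← mul_assoc]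
      rw [relSS ⟨hi, by omega⟩, one_mul, mul_assoc, relSS ⟨hi, by omega⟩, mul_one]
    rw [e']
    exact ((commTS (by omega)).mul_right (ih (i+1) (by omega) (by omega))).mul_right
      (commTS (by omega))

theorem midS_transp {r i j : ℕ} (hi : 1 ≤ i) (hir : i < r) (hrj : r + 2 ≤ j)
    (hj : j ≤ n) : Commute (sB n N r) (transpB n N i j) := by
  revert hj
  induction j, hrj using Nat.le_induction with
  | base =>
    intro hj
    exact midS_j0_transp hj (r - i) (by omega) i hi (by omega)
  | succ j hrj ih =>
    intro hj
    rw [transpB_succ (by omega)]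
    exact ((commSS (by omega)).mul_right (ih (by omega))).mul_right (commSS (by omega))

theorem midS_ov {r i j : ℕ} (hi : 1 ≤ i) (hir : i < r) (hrj : r + 2 ≤ j)
    (hj : j ≤ n) : Commute (sB n N r) (ovB n N i j) := by
  revert hj
  induction j, hrj using Nat.le_induction with
  | base =>
    intro hj
    exact midS_j0_ov hj (r - i) (by omega) i hi (by omega)
  | succ j hrj ih =>
    intro hj
    rw [ovB_succ (by omega)]
    exact ((commSS (by omega)).mul_right (ih (by omega))).mul_right (commSS (by omega))

theorem midT_transp {r i j : ℕ} (hi : 1 ≤ i) (hir : i < r) (hrj : r + 2 ≤ j)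
    (hj : j ≤ n) : Commute (tB n N r) (transpB n N i j) := by
  revert hj
  induction j, hrj using Nat.le_induction with
  | base =>
    intro hj
    exact midT_j0_transp hj (r - i) (by omega) i hi (by omega)
  | succ j hrj ih =>
    intro hj
    rw [transpB_succ (by omega)]
    exact ((commTS (by omega)).mul_right (ih (by omega))).mul_right (commTS (by omega))

theorem midT_ov {r i j : ℕ} (hi : 1 ≤ i) (hir : i < r) (hrj : r + 2 ≤ j)
    (hj : j ≤ n) : Commute (tB n N r) (ovB n N i j) := by
  revert hj
  induction j, hrj using Nat.le_induction with
  | base =>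
    intro hj
    exact midT_j0_ov hj (r - i) (by omega) i hi (by omega)
  | succ j hrj ih =>
    intro hj
    rw [ovB_succ (by omega)]
    exact ((commTS (by omega)).mul_right (ih (by omega))).mul_right (commTS (by omega))


/-! ### Conjugation-shuffling helpers -/

theorem mulconj1 {M : Type*} [Semigroup M] {g a c x : M}
    (h1 : g * a = a * g) (h2 : a * c = c * a) :
    g * (a * x * a) * c = a * (g * x * c) * a := by
  calc g * (a * x * a) * c = (g * a) * x * (a * c) := by simp only [mul_assoc]
    _ = (a * g) * x * (c * a) := by rw [h1, h2]
    _ = a * (g * x * c) * a := by simp only [mul_assoc]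

theorem mulconj3 {M : Type*} [Semigroup M] {g a x : M} (h1 : g * a = a * g) :
    g * (a * x * a) = a * (g * x) * a := by
  simp only [← mul_assoc]
  rw [h1]

theorem mulconj4 {M : Type*} [Semigroup M] {g a x : M} (h1 : g * a = a * g) :
    (a * x * a) * g = a * (x * g) * a := by
  simp only [mul_assoc]
  rw [h1]

/-! ### Pair identities: column pairs `(i,r), (i,r+1)` for `i < r` -/

theorem pairI0 {r : ℕ} (hrn : r ≤ n - 1) :
    ∀ d, 1 ≤ d → ∀ i, 1 ≤ i → i + d = r →
      tB n N r * transpB n N i r * sB n N r = tB n N r * ovB n N i r := by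
  intro d hd
  induction d, hd using Nat.le_induction with
  | base =>
    intro i hi hir
    have hr : r = i + 1 := by omega
    subst hr
    rw [transpB_base, ovB_base]
    exact dTSS_hi hi (by omega)
  | succ d hd ih =>
    intro i hi hir
    have c1 : tB n N r * sB n N i = sB n N i * tB n N r := (commTS (by omega)).eq
    have c2 : sB n N i * sB n N r = sB n N r * sB n N i := (commSS (by omega)).eq
    have eT : transpB n N i r = sB n N i * transpB n N (i+1) r * sB n N i := by
      rw [← transp_fst (n := n) (N := N) (k := i) (l := r) hi (by omega) (by omega)]
      simp only [← mul_assoc]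
      rw [relSS ⟨hi, by omega⟩, one_mul, mul_assoc, relSS ⟨hi, by omega⟩, mul_one]
    have eO : ovB n N i r = sB n N i * ovB n N (i+1) r * sB n N i := by
      rw [← ov_fst (n := n) (N := N) (k := i) (l := r) hi (by omega) (by omega)]
      simp only [← mul_assoc]
      rw [relSS ⟨hi, by omega⟩, one_mul, mul_assoc, relSS ⟨hi, by omega⟩, mul_one]
    rw [eT, eO, mulconj1 c1 c2, ih (i+1) (by omega) (by omega), ← mulconj3 c1]

theorem pairII0 {r : ℕ} (hrn : r ≤ n - 1) :
    ∀ d, 1 ≤ d → ∀ i, 1 ≤ i → i + d = r →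
      tB n N r * transpB n N i r = tB n N r * ovB n N i r * sB n N r := by
  intro d hd
  induction d, hd using Nat.le_induction with
  | base =>
    intro i hi hir
    have hr : r = i + 1 := by omega
    subst hr
    rw [transpB_base, ovB_base]
    exact (relTTS ⟨hi, by omega⟩).symm
  | succ d hd ih =>
    intro i hi hir
    have c1 : tB n N r * sB n N i = sB n N i * tB n N r := (commTS (by omega)).eq
    have c2 : sB n N i * sB n N r = sB n N r * sB n N i := (commSS (by omega)).eq
    have eT : transpB n N i r = sB n N i * transpB n N (i+1) r * sB n N i := by
      rw [← transp_fst (n := n) (N := N) (k := i) (l := r) hi (by omega) (by omega)]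
      simp only [← mul_assoc]
      rw [relSS ⟨hi, by omega⟩, one_mul, mul_assoc, relSS ⟨hi, by omega⟩, mul_one]
    have eO : ovB n N i r = sB n N i * ovB n N (i+1) r * sB n N i := by
      rw [← ov_fst (n := n) (N := N) (k := i) (l := r) hi (by omega) (by omega)]
      simp only [← mul_assoc]
      rw [relSS ⟨hi, by omega⟩, one_mul, mul_assoc, relSS ⟨hi, by omega⟩, mul_one]
    rw [eT, eO, mulconj3 c1, ih (i+1) (by omega) (by omega), ← mulconj1 c1 c2]

theorem pairI0' {r : ℕ} (hrn : r ≤ n - 1) :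
    ∀ d, 1 ≤ d → ∀ i, 1 ≤ i → i + d = r →
      sB n N r * transpB n N i r * tB n N r = ovB n N i r * tB n N r := by
  intro d hd
  induction d, hd using Nat.le_induction with
  | base =>
    intro i hi hir
    have hr : r = i + 1 := by omega
    subst hr
    rw [transpB_base, ovB_base]
    exact dSST_hi hi (by omega)
  | succ d hd ih =>
    intro i hi hir
    have c1 : sB n N r * sB n N i = sB n N i * sB n N r := (commSS (by omega)).eq
    have c2 : sB n N i * tB n N r = tB n N r * sB n N i := (commTS (by omega)).symm.eq
    have c3 : tB n N r * sB n N i = sB n N i * tB n N r := (commTS (by omega)).eq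
    have eT : transpB n N i r = sB n N i * transpB n N (i+1) r * sB n N i := by
      rw [← transp_fst (n := n) (N := N) (k := i) (l := r) hi (by omega) (by omega)]
      simp only [← mul_assoc]
      rw [relSS ⟨hi, by omega⟩, one_mul, mul_assoc, relSS ⟨hi, by omega⟩, mul_one]
    have eO : ovB n N i r = sB n N i * ovB n N (i+1) r * sB n N i := by
      rw [← ov_fst (n := n) (N := N) (k := i) (l := r) hi (by omega) (by omega)]
      simp only [← mul_assoc]
      rw [relSS ⟨hi, by omega⟩, one_mul, mul_assoc, relSS ⟨hi, by omega⟩, mul_one]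
    rw [eT, eO, mulconj1 c1 c2, ih (i+1) (by omega) (by omega), ← mulconj4 c3]

theorem pairII0' {r : ℕ} (hrn : r ≤ n - 1) :
    ∀ d, 1 ≤ d → ∀ i, 1 ≤ i → i + d = r →
      transpB n N i r * tB n N r = sB n N r * ovB n N i r * tB n N r := by
  intro d hd
  induction d, hd using Nat.le_induction with
  | base =>
    intro i hi hir
    have hr : r = i + 1 := by omega
    subst hr
    rw [transpB_base, ovB_base]
    exact (dSTT hi (by omega)).symm
  | succ d hd ih =>
    intro i hi hir
    have c1 : sB n N r * sB n N i = sB n N i * sB n N r := (commSS (by omega)).eq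
    have c2 : sB n N i * tB n N r = tB n N r * sB n N i := (commTS (by omega)).symm.eq
    have c3 : tB n N r * sB n N i = sB n N i * tB n N r := (commTS (by omega)).eq
    have eT : transpB n N i r = sB n N i * transpB n N (i+1) r * sB n N i := by
      rw [← transp_fst (n := n) (N := N) (k := i) (l := r) hi (by omega) (by omega)]
      simp only [← mul_assoc]
      rw [relSS ⟨hi, by omega⟩, one_mul, mul_assoc, relSS ⟨hi, by omega⟩, mul_one]
    have eO : ovB n N i r = sB n N i * ovB n N (i+1) r * sB n N i := by
      rw [← ov_fst (n := n) (N := N) (k := i) (l := r) hi (by omega) (by omega)]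
      simp only [← mul_assoc]
      rw [relSS ⟨hi, by omega⟩, one_mul, mul_assoc, relSS ⟨hi, by omega⟩, mul_one]
    rw [eT, eO, mulconj4 c3, ih (i+1) (by omega) (by omega), ← mulconj1 c1 c2]

/-! ### Pair identities: row pairs `(r,j), (r+1,j)` for `j > r+1` -/

theorem pairIII0 {r j : ℕ} (hr : 1 ≤ r) (hj : r + 2 ≤ j) (hjn : j ≤ n) :
    tB n N r * transpB n N r j * sB n N r = tB n N r * ovB n N r j := by
  revert hjn
  induction j, hj using Nat.le_induction with
  | base =>
    intro hjn
    have h2 : r + 1 ≤ n - 1 := by omega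
    rw [show r + 2 = (r+1)+1 from rfl, transpB_succ (Nat.le_refl _), transpB_base,
      ovB_succ (Nat.le_refl _), ovB_base]
    have l1 := congrArg (fun x => x * (sB n N (r+1) * sB n N r)) (dTSS (n := n) (N := N) hr h2)
    have l2 := congrArg (fun x => tB n N r * x * sB n N r) (relTS (n := n) (N := N) ⟨by omega, h2⟩)
    have l3 := dTTS (n := n) (N := N) hr h2
    have r1 := congrArg (fun x => x * sB n N (r+1)) (dTST (n := n) (N := N) hr h2)
    simp only [← mul_assoc] at l1 l2 l3 r1
    simp only [← mul_assoc]
    rw [l1, l2, l3, r1]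
  | succ j hj ih =>
    intro hjn
    have c1 : tB n N r * sB n N j = sB n N j * tB n N r := (commTS (by omega)).eq
    have c2 : sB n N j * sB n N r = sB n N r * sB n N j := (commSS (by omega)).eq
    rw [transpB_succ (by omega), ovB_succ (by omega), mulconj1 c1 c2,
      ih (by omega), ← mulconj3 c1]

theorem pairIV0 {r j : ℕ} (hr : 1 ≤ r) (hj : r + 2 ≤ j) (hjn : j ≤ n) :
    tB n N r * transpB n N r j = tB n N r * ovB n N r j * sB n N r := by
  revert hjn
  induction j, hj using Nat.le_induction with
  | base =>
    intro hjn
    have h2 : r + 1 ≤ n - 1 := by omega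
    rw [show r + 2 = (r+1)+1 from rfl, transpB_succ (Nat.le_refl _), transpB_base,
      ovB_succ (Nat.le_refl _), ovB_base]
    have l1 := congrArg (fun x => x * sB n N (r+1)) (dTSS (n := n) (N := N) hr h2)
    have l2 := congrArg (fun x => tB n N r * x) (relTS (n := n) (N := N) ⟨by omega, h2⟩)
    have r1 := congrArg (fun x => x * (sB n N (r+1) * sB n N r)) (dTST (n := n) (N := N) hr h2)
    have r2 := dTSS (n := n) (N := N) hr h2
    simp only [← mul_assoc] at l1 l2 r1 r2
    simp only [← mul_assoc]
    rw [l1, l2, r1, r2]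
  | succ j hj ih =>
    intro hjn
    have c1 : tB n N r * sB n N j = sB n N j * tB n N r := (commTS (by omega)).eq
    have c2 : sB n N j * sB n N r = sB n N r * sB n N j := (commSS (by omega)).eq
    rw [transpB_succ (by omega), ovB_succ (by omega), mulconj3 c1,
      ih (by omega), ← mulconj1 c1 c2]

theorem pairIII0' {r j : ℕ} (hr : 1 ≤ r) (hj : r + 2 ≤ j) (hjn : j ≤ n) :
    sB n N r * transpB n N r j * tB n N r = ovB n N r j * tB n N r := by
  revert hjn
  induction j, hj using Nat.le_induction with
  | base =>
    intro hjn
    have h2 : r + 1 ≤ n - 1 := by omega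
    rw [show r + 2 = (r+1)+1 from rfl, transpB_succ (Nat.le_refl _), transpB_base,
      ovB_succ (Nat.le_refl _), ovB_base]
    have l1 := congrArg (fun x => (sB n N r * sB n N (r+1)) * x) (dSST (n := n) (N := N) hr h2)
    have l2 := congrArg (fun x => sB n N r * x * tB n N r) (relST (n := n) (N := N) ⟨by omega, h2⟩)
    have l3 := relSTT (n := n) (N := N) ⟨hr, h2⟩
    have r1 := congrArg (fun x => sB n N (r+1) * x) (dTST (n := n) (N := N) hr h2)
    simp only [← mul_assoc] at l1 l2 l3 r1
    simp only [← mul_assoc]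
    rw [l1, l2, l3, r1]
  | succ j hj ih =>
    intro hjn
    have c1 : sB n N r * sB n N j = sB n N j * sB n N r := (commSS (by omega)).eq
    have c2 : sB n N j * tB n N r = tB n N r * sB n N j := (commTS (by omega)).symm.eq
    have c3 : tB n N r * sB n N j = sB n N j * tB n N r := (commTS (by omega)).eq
    rw [transpB_succ (by omega), ovB_succ (by omega), mulconj1 c1 c2,
      ih (by omega), ← mulconj4 c3]

theorem pairIV0' {r j : ℕ} (hr : 1 ≤ r) (hj : r + 2 ≤ j) (hjn : j ≤ n) :
    transpB n N r j * tB n N r = sB n N r * ovB n N r j * tB n N r := by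
  revert hjn
  induction j, hj using Nat.le_induction with
  | base =>
    intro hjn
    have h2 : r + 1 ≤ n - 1 := by omega
    rw [show r + 2 = (r+1)+1 from rfl, transpB_succ (Nat.le_refl _), transpB_base,
      ovB_succ (Nat.le_refl _), ovB_base]
    have l1 := congrArg (fun x => sB n N (r+1) * x) (dSST (n := n) (N := N) hr h2)
    have l2 := congrArg (fun x => x * tB n N r) (relST (n := n) (N := N) ⟨by omega, h2⟩)
    have r1 := congrArg (fun x => (sB n N r * sB n N (r+1)) * x) (dTST (n := n) (N := N) hr h2)
    have r2 := dSST (n := n) (N := N) hr h2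
    simp only [← mul_assoc] at l1 l2 r1 r2
    simp only [← mul_assoc]
    rw [l1, l2, r1, r2]
  | succ j hj ih =>
    intro hjn
    have c1 : sB n N r * sB n N j = sB n N j * sB n N r := (commSS (by omega)).eq
    have c2 : sB n N j * tB n N r = tB n N r * sB n N j := (commTS (by omega)).symm.eq
    have c3 : tB n N r * sB n N j = sB n N j * tB n N r := (commTS (by omega)).eq
    rw [transpB_succ (by omega), ovB_succ (by omega), mulconj4 c3,
      ih (by omega), ← mulconj1 c1 c2]


/-! ### Block commutation lemmas -/

theorem blockS_diag {r : ℕ} (hr : 1 ≤ r) (hrn : r ≤ n - 1) :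
    Commute (sB n N r) (transpB n N r (r+1) - ovB n N r (r+1)) := by
  rw [transpB_base, ovB_base]
  show _ = _
  rw [mul_sub, sub_mul, relSS ⟨hr, hrn⟩, relST ⟨hr, hrn⟩, relTS ⟨hr, hrn⟩]

theorem blockT_diag {r : ℕ} (hr : 1 ≤ r) (hrn : r ≤ n - 1) :
    Commute (tB n N r) (transpB n N r (r+1) - ovB n N r (r+1)) := by
  rw [transpB_base, ovB_base]
  show _ = _
  rw [mul_sub, sub_mul, relTS ⟨hr, hrn⟩, relST ⟨hr, hrn⟩]

theorem blockS_col {i r : ℕ} (hi : 1 ≤ i) (hir : i < r) (hrn : r ≤ n - 1) :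
    Commute (sB n N r)
      ((transpB n N i r - ovB n N i r) + (transpB n N i (r+1) - ovB n N i (r+1))) := by
  have hss := relSS (n := n) (N := N) ⟨by omega, hrn⟩
  have hCT : transpB n N i (r+1) * sB n N r = sB n N r * transpB n N i r := by
    rw [transpB_succ (by omega), mul_assoc, hss, mul_one]
  have hCO : ovB n N i (r+1) * sB n N r = sB n N r * ovB n N i r := by
    rw [ovB_succ (by omega), mul_assoc, hss, mul_one]
  have hST : sB n N r * transpB n N i (r+1) = transpB n N i r * sB n N r := by
    rw [transpB_succ (by omega)]
    simp only [← mul_assoc]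
    rw [hss, one_mul]
  have hSO : sB n N r * ovB n N i (r+1) = ovB n N i r * sB n N r := by
    rw [ovB_succ (by omega)]
    simp only [← mul_assoc]
    rw [hss, one_mul]
  show _ = _
  rw [mul_add, mul_sub, mul_sub, add_mul, sub_mul, sub_mul, hST, hSO, ← hCT, ← hCO]
  abel

theorem blockT_col {i r : ℕ} (hi : 1 ≤ i) (hir : i < r) (hrn : r ≤ n - 1) :
    Commute (tB n N r)
      ((transpB n N i r - ovB n N i r) + (transpB n N i (r+1) - ovB n N i (r+1))) := by
  have hts := relTS (n := n) (N := N) ⟨by omega, hrn⟩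
  have hst := relST (n := n) (N := N) ⟨by omega, hrn⟩
  have I0 := pairI0 (n := n) (N := N) hrn (r - i) (by omega) i hi (by omega)
  have II0 := pairII0 (n := n) (N := N) hrn (r - i) (by omega) i hi (by omega)
  have I0' := pairI0' (n := n) (N := N) hrn (r - i) (by omega) i hi (by omega)
  have II0' := pairII0' (n := n) (N := N) hrn (r - i) (by omega) i hi (by omega)
  -- t * C = t * B  (C = transp i (r+1), B = ov i r)
  have hTC : tB n N r * transpB n N i (r+1) = tB n N r * ovB n N i r := by
    rw [transpB_succ (by omega)]
    calc tB n N r * (sB n N r * transpB n N i r * sB n N r)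
        = (tB n N r * sB n N r) * (transpB n N i r * sB n N r) := by simp only [mul_assoc]
      _ = tB n N r * (transpB n N i r * sB n N r) := by rw [hts]
      _ = tB n N r * transpB n N i r * sB n N r := by rw [mul_assoc]
      _ = tB n N r * ovB n N i r := I0
  -- t * D = t * A  (D = ov i (r+1), A = transp i r)
  have hTD : tB n N r * ovB n N i (r+1) = tB n N r * transpB n N i r := by
    rw [ovB_succ (by omega)]
    calc tB n N r * (sB n N r * ovB n N i r * sB n N r)
        = (tB n N r * sB n N r) * (ovB n N i r * sB n N r) := by simp only [mul_assoc]
      _ = tB n N r * (ovB n N i r * sB n N r) := by rw [hts]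
      _ = tB n N r * ovB n N i r * sB n N r := by rw [mul_assoc]
      _ = tB n N r * transpB n N i r := II0.symm
  -- C * t = B * t
  have hCT : transpB n N i (r+1) * tB n N r = ovB n N i r * tB n N r := by
    rw [transpB_succ (by omega)]
    calc sB n N r * transpB n N i r * sB n N r * tB n N r
        = (sB n N r * transpB n N i r) * (sB n N r * tB n N r) := by simp only [mul_assoc]
      _ = (sB n N r * transpB n N i r) * tB n N r := by rw [hst]
      _ = ovB n N i r * tB n N r := I0'
  -- D * t = A * t
  have hDT : ovB n N i (r+1) * tB n N r = transpB n N i r * tB n N r := by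
    rw [ovB_succ (by omega)]
    calc sB n N r * ovB n N i r * sB n N r * tB n N r
        = (sB n N r * ovB n N i r) * (sB n N r * tB n N r) := by simp only [mul_assoc]
      _ = (sB n N r * ovB n N i r) * tB n N r := by rw [hst]
      _ = transpB n N i r * tB n N r := II0'.symm
  show _ = _
  rw [mul_add, mul_sub, mul_sub, add_mul, sub_mul, sub_mul, hTC, hTD, hCT, hDT]
  abel

theorem blockS_row {r j : ℕ} (hr : 1 ≤ r) (hj : r + 2 ≤ j) (hjn : j ≤ n) :
    Commute (sB n N r)
      ((transpB n N r j - ovB n N r j) + (transpB n N (r+1) j - ovB n N (r+1) j)) := by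
  have hss := relSS (n := n) (N := N) (k := r) ⟨hr, by omega⟩
  have eT := transp_fst (n := n) (N := N) (k := r) (l := j) hr hj hjn
  have eO := ov_fst (n := n) (N := N) (k := r) (l := j) hr hj hjn
  have hST : sB n N r * transpB n N (r+1) j = transpB n N r j * sB n N r := by
    rw [← eT]
    simp only [← mul_assoc]
    rw [hss, one_mul]
  have hSO : sB n N r * ovB n N (r+1) j = ovB n N r j * sB n N r := by
    rw [← eO]
    simp only [← mul_assoc]
    rw [hss, one_mul]
  have hCT : transpB n N (r+1) j * sB n N r = sB n N r * transpB n N r j := by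
    rw [← eT, mul_assoc, hss, mul_one]
  have hCO : ovB n N (r+1) j * sB n N r = sB n N r * ovB n N r j := by
    rw [← eO, mul_assoc, hss, mul_one]
  show _ = _
  rw [mul_add, mul_sub, mul_sub, add_mul, sub_mul, sub_mul, hST, hSO, ← hCT, ← hCO]
  abel

theorem blockT_row {r j : ℕ} (hr : 1 ≤ r) (hj : r + 2 ≤ j) (hjn : j ≤ n) :
    Commute (tB n N r)
      ((transpB n N r j - ovB n N r j) + (transpB n N (r+1) j - ovB n N (r+1) j)) := by
  have hts := relTS (n := n) (N := N) (k := r) ⟨hr, by omega⟩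
  have hst := relST (n := n) (N := N) (k := r) ⟨hr, by omega⟩
  have eT := transp_fst (n := n) (N := N) (k := r) (l := j) hr hj hjn
  have eO := ov_fst (n := n) (N := N) (k := r) (l := j) hr hj hjn
  have III0 := pairIII0 (n := n) (N := N) hr hj hjn
  have IV0 := pairIV0 (n := n) (N := N) hr hj hjn
  have III0' := pairIII0' (n := n) (N := N) hr hj hjn
  have IV0' := pairIV0' (n := n) (N := N) hr hj hjn
  have hTC : tB n N r * transpB n N (r+1) j = tB n N r * ovB n N r j := by
    rw [← eT]
    calc tB n N r * (sB n N r * transpB n N r j * sB n N r)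
        = (tB n N r * sB n N r) * (transpB n N r j * sB n N r) := by simp only [mul_assoc]
      _ = tB n N r * (transpB n N r j * sB n N r) := by rw [hts]
      _ = tB n N r * transpB n N r j * sB n N r := by rw [mul_assoc]
      _ = tB n N r * ovB n N r j := III0
  have hTD : tB n N r * ovB n N (r+1) j = tB n N r * transpB n N r j := by
    rw [← eO]
    calc tB n N r * (sB n N r * ovB n N r j * sB n N r)
        = (tB n N r * sB n N r) * (ovB n N r j * sB n N r) := by simp only [mul_assoc]
      _ = tB n N r * (ovB n N r j * sB n N r) := by rw [hts]
      _ = tB n N r * ovB n N r j * sB n N r := by rw [mul_assoc]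
      _ = tB n N r * transpB n N r j := IV0.symm
  have hCT : transpB n N (r+1) j * tB n N r = ovB n N r j * tB n N r := by
    rw [← eT]
    calc sB n N r * transpB n N r j * sB n N r * tB n N r
        = (sB n N r * transpB n N r j) * (sB n N r * tB n N r) := by simp only [mul_assoc]
      _ = (sB n N r * transpB n N r j) * tB n N r := by rw [hst]
      _ = ovB n N r j * tB n N r := III0'
  have hDT : ovB n N (r+1) j * tB n N r = transpB n N r j * tB n N r := by
    rw [← eO]
    calc sB n N r * ovB n N r j * sB n N r * tB n N r
        = (sB n N r * ovB n N r j) * (sB n N r * tB n N r) := by simp only [mul_assoc]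
      _ = (sB n N r * ovB n N r j) * tB n N r := by rw [hst]
      _ = transpB n N r j * tB n N r := IV0'.symm
  show _ = _
  rw [mul_add, mul_sub, mul_sub, add_mul, sub_mul, sub_mul, hTC, hTD, hCT, hDT]
  abel


/-! ### The central elements `Z_m` and the final assembly -/

/-- `Z_m = Σ_{1 ≤ i < j ≤ m} ((i,j) - ov(i,j))`. -/
def ZB (n : ℕ) (N : ℂ) (m : ℕ) : BrauerAlgebra n N :=
  ∑ j ∈ Finset.range m, ∑ i ∈ Finset.range j,
    (transpB n N (i+1) (j+1) - ovB n N (i+1) (j+1))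

/-- The generic splitting argument: an element commuting with all the
relevant blocks commutes with `Z_m`. -/
theorem comm_Z_of {m : ℕ} (g : BrauerAlgebra n N) (r : ℕ) (hr : 1 ≤ r)
    (hrm : r + 1 ≤ m) (hmn : m ≤ n)
    (hfar : ∀ i j, 1 ≤ i → i + 1 ≤ j → j ≤ n → (j < r ∨ r + 1 < i) →
      Commute g (transpB n N i j - ovB n N i j))
    (hmid : ∀ i j, 1 ≤ i → i < r → r + 2 ≤ j → j ≤ n →
      Commute g (transpB n N i j - ovB n N i j))
    (hcol : ∀ i, 1 ≤ i → i < r →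
      Commute g ((transpB n N i r - ovB n N i r)
        + (transpB n N i (r+1) - ovB n N i (r+1))))
    (hrow : ∀ j, r + 2 ≤ j → j ≤ n →
      Commute g ((transpB n N r j - ovB n N r j)
        + (transpB n N (r+1) j - ovB n N (r+1) j)))
    (hdiag : Commute g (transpB n N r (r+1) - ovB n N r (r+1))) :
    Commute g (ZB n N m) := by
  obtain ⟨r', rfl⟩ : ∃ r', r = r' + 1 := ⟨r - 1, by omega⟩
  unfold ZB
  simp only [Finset.range_eq_Ico]
  rw [← Finset.sum_Ico_consecutive _ (by omega : 0 ≤ r' + 2) (by omega : r' + 2 ≤ m),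
    ← Finset.sum_Ico_consecutive _ (by omega : 0 ≤ r') (by omega : r' ≤ r' + 2)]
  refine (Commute.add_right (Commute.add_right ?_ ?_) ?_)
  · -- rows with j + 1 ≤ r' + 1 = r : all terms are "far"
    refine Commute.sum_right _ _ _ (fun j hj => Commute.sum_right _ _ _ (fun i hi => ?_))
    rw [Finset.mem_Ico] at hj
    rw [Finset.mem_Ico] at hi
    exact hfar (i+1) (j+1) (by omega) (by omega) (by omega) (by omega)
  · -- rows j = r', r' + 1 : columns pairing
    have hpair : Finset.Ico r' (r' + 2) = {r', r' + 1} := by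
      ext x
      simp only [Finset.mem_Ico, Finset.mem_insert, Finset.mem_singleton]
      omega
    rw [hpair, Finset.sum_pair (by omega : r' ≠ r' + 1),
      Finset.sum_Ico_succ_top (by omega : 0 ≤ r'),
      ← add_assoc, ← Finset.sum_add_distrib]
    refine Commute.add_right (Commute.sum_right _ _ _ (fun i hi => ?_)) ?_
    · rw [Finset.mem_Ico] at hi
      exact hcol (i+1) (by omega) (by omega)
    · exact hdiag
  · -- rows with j ≥ r' + 2, i.e. second index j + 1 ≥ r + 2
    refine Commute.sum_right _ _ _ (fun j hj => ?_)
    rw [Finset.mem_Ico] at hj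
    rw [← Finset.sum_Ico_consecutive _ (by omega : 0 ≤ r' + 2) (by omega : r' + 2 ≤ j),
      ← Finset.sum_Ico_consecutive _ (by omega : 0 ≤ r') (by omega : r' ≤ r' + 2)]
    refine (Commute.add_right (Commute.add_right ?_ ?_) ?_)
    · refine Commute.sum_right _ _ _ (fun i hi => ?_)
      rw [Finset.mem_Ico] at hi
      exact hmid (i+1) (j+1) (by omega) (by omega) (by omega) (by omega)
    · have hpair : Finset.Ico r' (r' + 2) = {r', r' + 1} := by
        ext x
        simp only [Finset.mem_Ico, Finset.mem_insert, Finset.mem_singleton]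
        omega
      rw [hpair, Finset.sum_pair (by omega : r' ≠ r' + 1)]
      exact hrow (j+1) (by omega) (by omega)
    · refine Commute.sum_right _ _ _ (fun i hi => ?_)
      rw [Finset.mem_Ico] at hi
      exact hfar (i+1) (j+1) (by omega) (by omega) (by omega) (by omega)

theorem commS_Z {r m : ℕ} (hr : 1 ≤ r) (hrm : r + 1 ≤ m) (hmn : m ≤ n) :
    Commute (sB n N r) (ZB n N m) := by
  refine comm_Z_of _ r hr hrm hmn ?_ ?_ ?_ ?_ ?_
  · intro i j hi hij hj h
    exact (farS_transp hi hij h).sub_right (farS_ov hi hij h)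
  · intro i j hi hir hj hjn
    exact (midS_transp hi hir hj hjn).sub_right (midS_ov hi hir hj hjn)
  · intro i hi hir
    exact blockS_col hi hir (by omega)
  · intro j hj hjn
    exact blockS_row hr hj hjn
  · exact blockS_diag hr (by omega)

theorem commT_Z {r m : ℕ} (hr : 1 ≤ r) (hrm : r + 1 ≤ m) (hmn : m ≤ n) :
    Commute (tB n N r) (ZB n N m) := by
  refine comm_Z_of _ r hr hrm hmn ?_ ?_ ?_ ?_ ?_
  · intro i j hi hij hj h
    exact (farT_transp hi hij h).sub_right (farT_ov hi hij h)
  · intro i j hi hir hj hjn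
    exact (midT_transp hi hir hj hjn).sub_right (midT_ov hi hir hj hjn)
  · intro i hi hir
    exact blockT_col hi hir (by omega)
  · intro j hj hjn
    exact blockT_row hr hj hjn
  · exact blockT_diag hr (by omega)

theorem Z_comm_sigma {m k l : ℕ} (hk : 1 ≤ k) (hl : l ≤ m) (hmn : m ≤ n) :
    Commute (ZB n N m) (sigmaB n N k l) := by
  induction l with
  | zero => rw [sigmaB_base (by omega)]; exact Commute.one_right _
  | succ l ih =>
    rcases le_or_gt (l + 1) (k + 1) with h | h
    · rw [sigmaB_base h]; exact Commute.one_right _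
    · rw [sigmaB_succ (by omega)]
      exact ((commS_Z (by omega) (by omega) hmn).symm).mul_right (ih (by omega))

theorem Z_comm_sigmaInv {m k l : ℕ} (hk : 1 ≤ k) (hl : l ≤ m) (hmn : m ≤ n) :
    Commute (ZB n N m) (sigmaBInv n N k l) := by
  induction l with
  | zero => rw [sigmaBInv_base (by omega)]; exact Commute.one_right _
  | succ l ih =>
    rcases le_or_gt (l + 1) (k + 1) with h | h
    · rw [sigmaBInv_base h]; exact Commute.one_right _
    · rw [sigmaBInv_succ (by omega)]
      exact (ih (by omega)).mul_right ((commS_Z (by omega) (by omega) hmn).symm)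

theorem Z_comm_transp {m i j : ℕ} (hi : 1 ≤ i) (hij : i < j) (hjm : j ≤ m)
    (hmn : m ≤ n) : Commute (ZB n N m) (transpB n N i j) := by
  unfold transpB
  exact ((Z_comm_sigma hi (by omega) hmn).mul_right
    ((commS_Z hi (by omega) hmn).symm)).mul_right (Z_comm_sigmaInv hi (by omega) hmn)

theorem Z_comm_ov {m i j : ℕ} (hi : 1 ≤ i) (hij : i < j) (hjm : j ≤ m)
    (hmn : m ≤ n) : Commute (ZB n N m) (ovB n N i j) := by
  unfold ovB
  exact ((Z_comm_sigma hi (by omega) hmn).mul_right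
    ((commT_Z hi (by omega) hmn).symm)).mul_right (Z_comm_sigmaInv hi (by omega) hmn)

theorem Z_comm_Z_le {k m : ℕ} (hk : k ≤ m) (hmn : m ≤ n) :
    Commute (ZB n N m) (ZB n N k) := by
  unfold ZB
  refine Commute.sum_right _ _ _ (fun j hj => Commute.sum_right _ _ _ (fun i hi => ?_))
  rw [Finset.mem_range] at hj hi
  exact (Z_comm_transp (by omega) (by omega) (by omega) hmn).sub_right
    (Z_comm_ov (by omega) (by omega) (by omega) hmn)

theorem Z_comm_Z {k m : ℕ} (hk : k ≤ n) (hmn : m ≤ n) :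
    Commute (ZB n N m) (ZB n N k) := by
  rcases le_or_gt k m with h | h
  · exact Z_comm_Z_le h hmn
  · exact (Z_comm_Z_le (le_of_lt h) hk).symm

theorem xB_eq {k : ℕ} (hk : 1 ≤ k) :
    xB n N k = algebraMap ℂ (BrauerAlgebra n N) ((N - 1) / 2)
      + (ZB n N k - ZB n N (k - 1)) := by
  obtain ⟨k', rfl⟩ : ∃ k', k = k' + 1 := ⟨k - 1, by omega⟩
  unfold xB ZB
  rw [Finset.sum_range_succ (f := fun j => ∑ i ∈ Finset.range j,
    (transpB n N (i+1) (j+1) - ovB n N (i+1) (j+1)))]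
  simp only [Nat.add_sub_cancel]
  rw [add_sub_cancel_left]

end BrauerJM

open BrauerJM in

/-- The Jucys–Murphy elements `x₁,…,xₙ` of the Brauer
algebra `B(n,N)` pairwise commute. -/
theorem jucysMurphy_commute (n : ℕ) (N : ℂ) (k l : ℕ)
    (hk1 : 1 ≤ k) (hkn : k ≤ n) (hl1 : 1 ≤ l) (hln : l ≤ n) :
    xB n N k * xB n N l = xB n N l * xB n N k := by
  have hx := xB_eq (n := n) (N := N) hk1
  have hy := xB_eq (n := n) (N := N) hl1
  rw [hx, hy]
  have hc : ∀ x : BrauerAlgebra n N,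
      Commute (algebraMap ℂ (BrauerAlgebra n N) ((N - 1) / 2)) x :=
    fun x => Algebra.commutes _ x
  have hZZ : Commute (ZB n N k - ZB n N (k - 1)) (ZB n N l - ZB n N (l - 1)) := by
    refine Commute.sub_right (Commute.sub_left ?_ ?_) (Commute.sub_left ?_ ?_)
    · exact (Z_comm_Z (by omega) (by omega)).symm
    · exact Z_comm_Z (by omega) (by omega)
    · exact (Z_comm_Z (by omega) (by omega)).symm
    · exact Z_comm_Z (by omega) (by omega)
  exact Commute.add_right (Commute.add_left (Commute.refl _) ((hc _).symm))
    (Commute.add_left (hc _) hZZ)
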